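/- Let X be a two-dimensional real normed vector space and a, b ∈ X. If the closed ball of radius 2 centered at 0 is contained in the union of the closed ball of radius 2 centered at b and the closed ball of radius 1 centered at a, then b = 0. -/

import Mathlib

open Metric

/-- In a two-dimensional real normed space, if
`B̄(0,2) ⊆ B̄(b,2) ∪ B̄(a,1)` then `b = 0`. -/
theorem stmt4 {X : Type*} [NormedAddCommGroup X] [NormedSpace ℝ X]
    (hdim : Module.finrank ℝ X = 2) (a b : X)
    (h : Metric.closedBall (0 : X) 2 ⊆ Metric.closedBall b 2 ∪ Metric.closedBall a 1) :
    b = 0 := by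
  by_contra hb
  have hbpos : 0 < ‖b‖ := norm_pos_iff.mpr hb
  -- anything in the big ball missed by B̄(b,2) is within 1 of a
  have key : ∀ z : X, ‖z‖ ≤ 2 → 2 < ‖z - b‖ → ‖z - a‖ ≤ 1 := by
    intro z hz hzb
    have hz2 : z ∈ Metric.closedBall (0 : X) 2 := by
      simpa [Metric.mem_closedBall, dist_eq_norm] using hz
    rcases h hz2 with h1 | h2
    · rw [Metric.mem_closedBall, dist_eq_norm] at h1; linarith
    · rw [Metric.mem_closedBall, dist_eq_norm] at h2; exact h2
  have far : ∀ u v : X, ‖u - a‖ ≤ 1 → ‖v - a‖ ≤ 1 → ‖u - v‖ ≤ 2 := by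
    intro u v hu hv
    calc ‖u - v‖ = ‖(u - a) - (v - a)‖ := by rw [sub_sub_sub_cancel_right]
      _ ≤ ‖u - a‖ + ‖v - a‖ := norm_sub_le _ _
      _ ≤ 2 := by linarith
  -- the sphere of radius 2 is connected
  have hrank : 1 < Module.rank ℝ X := by
    have h2 : Module.rank ℝ X = 2 :=
      (Module.rank_eq_ofNat_iff_finrank_eq_ofNat 2).mpr hdim
    rw [h2]; exact_mod_cast Nat.one_lt_two
  have hconn : IsConnected (sphere (0 : X) 2) :=
    isConnected_sphere hrank 0 (by norm_num)
  -- find x on the sphere with ‖x - b‖ = ‖x + b‖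
  obtain ⟨x₀, hx₀⟩ := hconn.nonempty
  have hx₀n : -x₀ ∈ sphere (0 : X) 2 := by
    simp only [mem_sphere_zero_iff_norm] at hx₀ ⊢
    simpa using hx₀
  set g : X → ℝ := fun z => ‖z - b‖ - ‖z + b‖ with hg
  have hgc : ContinuousOn g (sphere (0 : X) 2) :=
    (((continuous_id.sub continuous_const).norm).sub
      ((continuous_id.add continuous_const).norm)).continuousOn
  have hgneg : g (-x₀) = -g x₀ := by
    simp only [hg]
    have h1 : ‖-x₀ - b‖ = ‖x₀ + b‖ := by rw [← norm_neg]; congr 1; abel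
    have h2 : ‖-x₀ + b‖ = ‖x₀ - b‖ := by rw [← norm_neg]; congr 1; abel
    rw [h1, h2]; ring
  have hzero : ∃ x ∈ sphere (0 : X) 2, g x = 0 := by
    rcases le_total 0 (g x₀) with hle | hle
    · have : (0 : ℝ) ∈ Set.Icc (g (-x₀)) (g x₀) := ⟨by rw [hgneg]; linarith, hle⟩
      obtain ⟨x, hx, hx0⟩ :=
        hconn.isPreconnected.intermediate_value hx₀n hx₀ hgc this
      exact ⟨x, hx, hx0⟩
    · have : (0 : ℝ) ∈ Set.Icc (g x₀) (g (-x₀)) := ⟨hle, by rw [hgneg]; linarith⟩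
      obtain ⟨x, hx, hx0⟩ :=
        hconn.isPreconnected.intermediate_value hx₀ hx₀n hgc this
      exact ⟨x, hx, hx0⟩
  obtain ⟨x, hxs, hxg⟩ := hzero
  rw [mem_sphere_zero_iff_norm] at hxs
  have hxeq : ‖x - b‖ = ‖x + b‖ := by
    have := hxg; simp only [hg] at this; linarith
  have hsum : 4 ≤ ‖x - b‖ + ‖x + b‖ := by
    have h4 : ‖(x - b) + (x + b)‖ = 4 := by
      have : (x - b) + (x + b) = (2 : ℝ) • x := by module
      rw [this, norm_smul, hxs]; norm_num
    calc (4 : ℝ) = ‖(x - b) + (x + b)‖ := h4.symm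
      _ ≤ ‖x - b‖ + ‖x + b‖ := norm_add_le _ _
  have hr2 : 2 ≤ ‖x - b‖ := by linarith
  rcases lt_or_eq_of_le hr2 with hrgt | hreq
  · -- case ‖x-b‖ = ‖x+b‖ > 2 : antipodal points
    have h1 : ‖x - a‖ ≤ 1 := key x (le_of_eq hxs) hrgt
    have h2 : ‖(-x) - a‖ ≤ 1 := by
      refine key (-x) (by simpa using hxs.le) ?_
      have : ‖(-x) - b‖ = ‖x + b‖ := by rw [← norm_neg]; congr 1; abel
      rw [this, ← hxeq]; exact hrgt
    have := far x (-x) h1 h2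
    have h4 : ‖x - -x‖ = 4 := by
      have : x - -x = (2 : ℝ) • x := by module
      rw [this, norm_smul, hxs]; norm_num
    linarith [h4 ▸ this]
  · -- case ‖x-b‖ = ‖x+b‖ = 2 : flat face
    have hm1 : ‖x + (-1 : ℝ) • b‖ = 2 := by
      rw [neg_smul, one_smul, ← sub_eq_add_neg]; exact hreq.symm
    have hp1 : ‖x + (1 : ℝ) • b‖ = 2 := by rw [one_smul, ← hxeq]; exact hreq.symm
    have h0 : ‖x + (0 : ℝ) • b‖ = 2 := by rw [zero_smul, add_zero]; exact hxs
    -- convexity of t ↦ ‖x + t b‖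
    have hconv : ∀ s t θ : ℝ, 0 ≤ θ → θ ≤ 1 →
        ‖x + ((1 - θ) * s + θ * t) • b‖ ≤ (1 - θ) * ‖x + s • b‖ + θ * ‖x + t • b‖ := by
      intro s t θ h0θ h1θ
      have heq : x + ((1 - θ) * s + θ * t) • b
          = (1 - θ) • (x + s • b) + θ • (x + t • b) := by module
      rw [heq]
      calc ‖(1 - θ) • (x + s • b) + θ • (x + t • b)‖
          ≤ ‖(1 - θ) • (x + s • b)‖ + ‖θ • (x + t • b)‖ := norm_add_le _ _
        _ = (1 - θ) * ‖x + s • b‖ + θ * ‖x + t • b‖ := by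
            rw [norm_smul, norm_smul, Real.norm_of_nonneg (by linarith),
              Real.norm_of_nonneg h0θ]
    -- the function is ≥ 2 everywhere
    have hge : ∀ t : ℝ, 2 ≤ ‖x + t • b‖ := by
      intro t
      rcases le_total 0 t with ht | ht
      · set θ : ℝ := 1 / (1 + t) with hθ
        have h1t : (0 : ℝ) < 1 + t := by linarith
        have hθpos : 0 < θ := by positivity
        have hθle : θ ≤ 1 := by rw [hθ]; rw [div_le_one h1t]; linarith
        have hc := hconv (-1) t θ hθpos.le hθle
        have hid : (1 - θ) * (-1) + θ * t = 0 := by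
          have h1 := one_div_mul_cancel h1t.ne'; rw [← hθ] at h1; linear_combination h1
        rw [hid, h0, hm1] at hc
        have : θ * 2 ≤ θ * ‖x + t • b‖ := by linarith
        exact (mul_le_mul_iff_right₀ hθpos).mp this
      · set θ : ℝ := 1 / (1 - t) with hθ
        have h1t : (0 : ℝ) < 1 - t := by linarith
        have hθpos : 0 < θ := by positivity
        have hθle : θ ≤ 1 := by rw [hθ]; rw [div_le_one h1t]; linarith
        have hc := hconv 1 t θ hθpos.le hθle
        have hid : (1 - θ) * 1 + θ * t = 0 := by
          have h1 := one_div_mul_cancel h1t.ne'; rw [← hθ] at h1; linear_combination (-1 : ℝ) * h1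
        rw [hid, h0, hp1] at hc
        have : θ * 2 ≤ θ * ‖x + t • b‖ := by linarith
        exact (mul_le_mul_iff_right₀ hθpos).mp this
    -- the sublevel set
    set T : Set ℝ := {t : ℝ | ‖x + t • b‖ ≤ 2} with hT
    have hT1 : (1 : ℝ) ∈ T := by rw [hT]; simp only [Set.mem_setOf_eq]; rw [hp1]
    have hTm1 : (-1 : ℝ) ∈ T := by rw [hT]; simp only [Set.mem_setOf_eq]; rw [hm1]
    have hTbound : ∀ t ∈ T, |t| ≤ 4 / ‖b‖ := by
      intro t ht
      rw [le_div_iff₀ hbpos]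
      have h1 : ‖t • b‖ ≤ ‖x + t • b‖ + ‖x‖ := by
        calc ‖t • b‖ = ‖(x + t • b) - x‖ := by rw [add_sub_cancel_left]
          _ ≤ ‖x + t • b‖ + ‖x‖ := norm_sub_le _ _
      rw [norm_smul, Real.norm_eq_abs] at h1
      have ht' : ‖x + t • b‖ ≤ 2 := ht
      rw [hxs] at h1; linarith
    have hbddA : BddAbove T := ⟨4 / ‖b‖, fun t ht => (le_abs_self t).trans (hTbound t ht)⟩
    have hbddB : BddBelow T := ⟨-(4 / ‖b‖), fun t ht => by
      have := hTbound t ht; cases abs_le.mp this; linarith⟩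
    have hTclosed : IsClosed T := by
      have : Continuous fun t : ℝ => ‖x + t • b‖ :=
        (continuous_const.add (continuous_id.smul continuous_const)).norm
      exact isClosed_le this continuous_const
    set tp : ℝ := sSup T with htp
    set tm : ℝ := sInf T with htm
    have htpT : tp ∈ T := hTclosed.csSup_mem ⟨1, hT1⟩ hbddA
    have htmT : tm ∈ T := hTclosed.csInf_mem ⟨1, hT1⟩ hbddB
    have hout1 : 2 < ‖x + (tm - 1) • b‖ := by
      by_contra hc
      push_neg at hc
      have : tm ≤ tm - 1 := csInf_le hbddB hc
      linarith
    have hout2 : 2 < ‖x + (tp + 1) • b‖ := by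
      by_contra hc
      push_neg at hc
      have : tp + 1 ≤ tp := le_csSup hbddA hc
      linarith
    -- the two far points
    set u : X := x + tm • b with hu
    set v : X := -(x + tp • b) with hv
    have hua : ‖u - a‖ ≤ 1 := by
      refine key u htmT ?_
      have : u - b = x + (tm - 1) • b := by rw [hu]; module
      rw [this]; exact hout1
    have hva : ‖v - a‖ ≤ 1 := by
      refine key v ?_ ?_
      · rw [hv, norm_neg]; exact htpT
      · have : v - b = -(x + (tp + 1) • b) := by rw [hv]; module
        rw [this, norm_neg]; exact hout2
    have hfar := far u v hua hva
    have huv : u - v = (2 : ℝ) • (x + ((tm + tp) / 2) • b) := by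
      rw [hu, hv]; module
    have h4 : 4 ≤ ‖u - v‖ := by
      rw [huv, norm_smul]
      have := hge ((tm + tp) / 2)
      rw [Real.norm_ofNat]
      linarith
    linarith
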